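/- Let T be the complete q-ary tree of depth d (q ≥ 2, d ≥ 1). For every S ⊆ V(T) there exists a down-compressed set S' ⊆ V(T) with |S'| = |S| and |δ(S')| ≤ |δ(S)|. -/

import Mathlib

open scoped Classical

/-- A vertex of the complete `q`-ary tree of depth `d`: a sequence over `Fin q`
of length at most `d`. -/
def QV (q d : ℕ) : Type := {l : List (Fin q) // l.length ≤ d}

instance (q d : ℕ) : Finite (QV q d) :=
  (List.finite_length_le (Fin q) d).to_subtype

/-- The complete `q`-ary tree of depth `d`: two vertices are adjacent exactly when
one is obtained from the other by appending a single element. -/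
def qTree (q d : ℕ) : SimpleGraph (QV q d) where
  Adj u v := (∃ a : Fin q, v.val = u.val ++ [a]) ∨ (∃ a : Fin q, u.val = v.val ++ [a])
  symm := ⟨by intro u v h; tauto⟩
  loopless := by
    refine ⟨?_⟩
    rintro u (⟨a, ha⟩ | ⟨a, ha⟩) <;>
    · have := congrArg List.length ha
      simp at this

/-- The vertex border `δ(S)`: vertices outside `S` with a neighbour in `S`. -/
def vertexBorder {V : Type*} (G : SimpleGraph V) (S : Set V) : Set V :=
  {v | v ∉ S ∧ ∃ u ∈ S, G.Adj u v}

/-- `Φ_V(G, s)`: the minimum border size over vertex sets of size `s`. -/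
noncomputable def isoProfile {V : Type*} (G : SimpleGraph V) (s : ℕ) : ℕ :=
  sInf ((fun S => (vertexBorder G S).ncard) '' {S : Set V | S.ncard = s})

/-- `Φ_V(G)`: the vertex-isoperimetric peak, `max_{0 ≤ s ≤ |V|} Φ_V(G, s)`. -/
noncomputable def isoPeak {V : Type*} (G : SimpleGraph V) : ℕ :=
  sSup (isoProfile G '' Set.Icc 0 (Nat.card V))

/-- The vertex separation number: for each linear layout (a bijection from the
vertices to `{1, …, |V|}`, here modelled as `V ≃ Fin |V|`) take the maximum
border size of its prefix sets, then minimize over layouts. -/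
noncomputable def vsNum {V : Type*} (G : SimpleGraph V) : ℕ :=
  sInf {n | ∃ L : V ≃ Fin (Nat.card V),
    n = sSup {m | ∃ i : Fin (Nat.card V),
      m = (vertexBorder G {u | (L u : ℕ) ≤ (i : ℕ)}).ncard}}

namespace QV

variable {q d : ℕ}

/-- Level `i`: vertices at distance `i` from the root. -/
def level (q d : ℕ) (i : ℕ) : Set (QV q d) := {w | w.val.length = i}

/-- Descendants of `u` (including `u` itself). -/
def desc (u : QV q d) : Set (QV q d) := {w | u.val <+: w.val}

/-- `w` is a child of `u`. -/
def IsChildOf (w u : QV q d) : Prop := ∃ a : Fin q, w.val = u.val ++ [a]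

/-- `u` is to the left of `v`: same level and lexicographically smaller. -/
def LeftOf (u v : QV q d) : Prop :=
  u.val.length = v.val.length ∧ List.Lex (· < ·) u.val v.val

/-- `u` precedes `v` in the breadth-first ordering of the tree. -/
def Precedes (u v : QV q d) : Prop :=
  u.val.length < v.val.length ∨
    (u.val.length = v.val.length ∧ List.Lex (· < ·) u.val v.val)

/-- `u, v` are swappable in `S`. -/
def Swappable (S : Set (QV q d)) (u v : QV q d) : Prop :=
  LeftOf u v ∧ ((u ∉ S ∧ v ∈ S) ∨
    (u ∉ S ∧ v ∉ S ∧ (∀ w, IsChildOf w u → w ∉ S) ∧ (∃ w, IsChildOf w v ∧ w ∈ S)))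

/-- Level `i` of `S` is left-ordered: no swappable pair in level `i`. -/
def LevelLeftOrdered (S : Set (QV q d)) (i : ℕ) : Prop :=
  ∀ u v : QV q d, u.val.length = i → ¬ Swappable S u v

/-- `S` is left-ordered: every level is left-ordered. -/
def LeftOrdered (S : Set (QV q d)) : Prop := ∀ i, LevelLeftOrdered S i

/-- The canonical map used in a treeswap between `u` and `v`: a descendant of `u`
is sent to the corresponding descendant of `v` (same suffix), and vice versa;
other vertices are fixed. -/
noncomputable def swapAt (u v w : QV q d) : QV q d :=
  if h : u.val <+: w.val ∧ (v.val ++ w.val.drop u.val.length).length ≤ d then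
    ⟨v.val ++ w.val.drop u.val.length, h.2⟩
  else if h' : v.val <+: w.val ∧ (u.val ++ w.val.drop v.val.length).length ≤ d then
    ⟨u.val ++ w.val.drop v.val.length, h'.2⟩
  else w

/-- The treeswap of `S` between `u` and `v`. -/
noncomputable def treeswap (S : Set (QV q d)) (u v : QV q d) : Set (QV q d) :=
  {w | swapAt u v w ∈ S}

/-- The strict partial order `A < B` on subsets of the tree. -/
def SetPrec (A B : Set (QV q d)) : Prop :=
  (∀ i, (A ∩ level q d i).ncard = (B ∩ level q d i).ncard) ∧
  ∃ v, v ∈ A ∧ v ∉ B ∧ ∀ w, Precedes w v → (w ∈ A ↔ w ∈ B)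

/-- `S` is down-compressed. -/
def DownCompressed (S : Set (QV q d)) : Prop :=
  ∀ u ∈ S, ∀ v ∉ S,
    (vertexBorder (qTree q d) S).ncard ≤
      (vertexBorder (qTree q d) ((S ∪ {v}) \ {u})).ncard ∧
    (u.val.length < v.val.length →
      (vertexBorder (qTree q d) S).ncard <
        (vertexBorder (qTree q d) ((S ∪ {v}) \ {u})).ncard)

/-- `S'` is an aeolian compression of `S`. -/
def IsAeolianCompression (S S' : Set (QV q d)) : Prop :=
  ∃ u v : QV q d, LeftOf u v ∧
    ∃ R A : Set (QV q d), R.Nonempty ∧ R ⊆ S ∧ R ⊆ desc v ∧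
      A ⊆ desc u ∧ Disjoint A S ∧ A.ncard = R.ncard ∧
      S' = (S \ R) ∪ A ∧
      S'.ncard = S.ncard ∧
      (vertexBorder (qTree q d) S').ncard ≤ (vertexBorder (qTree q d) S).ncard

/-- `S` is aeolian-compressed. -/
def AeolianCompressed (S : Set (QV q d)) : Prop :=
  LeftOrdered S ∧ DownCompressed S ∧ ∀ S', ¬ IsAeolianCompression S S'

end QV
theorem exists_down_compressed_compression (q d : ℕ) (hq : 2 ≤ q) (hd : 1 ≤ d)
    (S : Set (QV q d)) :
    ∃ S' : Set (QV q d), QV.DownCompressed S' ∧ S'.ncard = S.ncard ∧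
      (vertexBorder (qTree q d) S').ncard ≤ (vertexBorder (qTree q d) S).ncard := by
  classical
  cases nonempty_fintype (QV q d)
  set n := S.ncard with hn
  set K := d * Fintype.card (QV q d) with hK
  let B : Set (QV q d) → ℕ := fun T => (vertexBorder (qTree q d) T).ncard
  let f : QV q d → ℕ := fun w => w.val.length
  let g : Set (QV q d) → ℕ := fun T => ∑ w : QV q d, T.indicator f w
  have hgK : ∀ T : Set (QV q d), g T ≤ K := by
    intro T
    calc (∑ w : QV q d, T.indicator f w)
        ≤ ∑ _w : QV q d, d := by
          apply Finset.sum_le_sum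
          intro w _
          by_cases hw : w ∈ T
          · rw [Set.indicator_of_mem hw]; exact w.2
          · rw [Set.indicator_of_notMem hw]; exact Nat.zero_le _
      _ = Fintype.card (QV q d) * d := by
          rw [Finset.sum_const, smul_eq_mul, Finset.card_univ]
      _ = K := Nat.mul_comm _ _
  let φ : Set (QV q d) → ℕ := fun T => B T * (K + 1) + (K - g T)
  have hne : (φ '' {T : Set (QV q d) | T.ncard = n}).Nonempty := ⟨φ S, S, rfl, rfl⟩
  obtain ⟨S', hS'n, hφ⟩ := Nat.sInf_mem hne
  have hmin : ∀ T : Set (QV q d), T.ncard = n → φ S' ≤ φ T := by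
    intro T hT
    rw [hφ]
    exact Nat.sInf_le ⟨T, hT, rfl⟩
  have key : ∀ T : Set (QV q d), T.ncard = n →
      B S' ≤ B T ∧ (B T = B S' → g T ≤ g S') := by
    intro T hT
    have h := hmin T hT
    have hgKT := hgK T
    have hgKS := hgK S'
    have hB : B S' ≤ B T := by
      by_contra hc
      push_neg at hc
      have h2 : (B T + 1) * (K + 1) ≤ B S' * (K + 1) :=
        Nat.mul_le_mul_right _ hc
      have h3 : φ T < (B T + 1) * (K + 1) := by
        show B T * (K + 1) + (K - g T) < (B T + 1) * (K + 1)
        have : K - g T ≤ K := Nat.sub_le _ _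
        nlinarith
      have h4 : B S' * (K + 1) ≤ φ S' := Nat.le_add_right _ _
      omega
    refine ⟨hB, fun hBe => ?_⟩
    have h5 : φ S' = B S' * (K + 1) + (K - g S') := rfl
    have h6 : φ T = B T * (K + 1) + (K - g T) := rfl
    rw [h5, h6, hBe] at h
    omega
  refine ⟨S', ?_, hS'n, (key S rfl).1⟩
  intro u hu v hv
  have huv : u ≠ v := fun h => hv (h ▸ hu)
  set T : Set (QV q d) := (S' ∪ {v}) \ {u} with hTdef
  have hcardT : T.ncard = n := by
    rw [hTdef, Set.union_singleton,
      Set.ncard_diff_singleton_of_mem (Set.mem_insert_iff.mpr (Or.inr hu)),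
      Set.ncard_insert_of_notMem hv, hS'n]
    omega
  have key_pt : ∀ w : QV q d,
      T.indicator f w + (if w = u then f w else 0)
      = S'.indicator f w + (if w = v then f w else 0) := by
    intro w
    by_cases hwu : w = u
    · subst hwu
      have hwT : w ∉ T := by simp [hTdef]
      simp [Set.indicator_of_notMem hwT, Set.indicator_of_mem hu, huv]
    · by_cases hwv : w = v
      · subst hwv
        have hwT : w ∈ T := by simp [hTdef, Ne.symm huv]
        simp [Set.indicator_of_mem hwT, Set.indicator_of_notMem hv, hwu]
      · have hwT : w ∈ T ↔ w ∈ S' := by simp [hTdef, hwu, hwv]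
        by_cases hwS : w ∈ S'
        · simp [Set.indicator_of_mem (hwT.mpr hwS), Set.indicator_of_mem hwS, hwu, hwv]
        · simp [Set.indicator_of_notMem (fun h => hwS (hwT.mp h)),
            Set.indicator_of_notMem hwS, hwu, hwv]
  have hgT : g T + u.val.length = g S' + v.val.length := by
    have h1 : (∑ w : QV q d, (T.indicator f w + (if w = u then f w else 0)))
        = ∑ w : QV q d, (S'.indicator f w + (if w = v then f w else 0)) :=
      Finset.sum_congr rfl (fun w _ => key_pt w)
    rw [Finset.sum_add_distrib, Finset.sum_add_distrib] at h1
    have h2 : (∑ w : QV q d, if w = u then f w else 0) = f u := by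
      rw [Finset.sum_ite_eq' Finset.univ u f]; simp
    have h3 : (∑ w : QV q d, if w = v then f w else 0) = f v := by
      rw [Finset.sum_ite_eq' Finset.univ v f]; simp
    rw [h2, h3] at h1
    exact h1
  obtain ⟨hB1, hB2⟩ := key T hcardT
  refine ⟨hB1, fun hlen => ?_⟩
  by_contra hc
  push_neg at hc
  have hBe : B T = B S' := le_antisymm hc hB1
  have := hB2 hBe
  omega
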